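/- For every subset X ⊆ ℤ², the closed convex hull closure(conv X) is locally polyhedral: its intersection with every box (product of two compact intervals) in ℝ² is a polytope. -/

import Mathlib

open Set Metric


-- Lemma 1: integer points in a box are finite
lemma intpts_icc_finite (lo hi : ℝ × ℝ) :
    ({p : ℝ × ℝ | ∃ a b : ℤ, p = ((a : ℝ), (b : ℝ))} ∩ Set.Icc lo hi).Finite := by
  apply Set.Finite.subset
    (((Set.finite_Icc (⌈lo.1⌉, ⌈lo.2⌉) (⌊hi.1⌋, ⌊hi.2⌋))).image
      (fun ab : ℤ × ℤ => ((ab.1 : ℝ), (ab.2 : ℝ))))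
  rintro p ⟨⟨a, b, rfl⟩, hp⟩
  obtain ⟨⟨h1, h2⟩, ⟨h3, h4⟩⟩ := hp
  exact ⟨(a, b), ⟨⟨Int.ceil_le.2 h1, Int.ceil_le.2 h2⟩, ⟨Int.le_floor.2 h3, Int.le_floor.2 h4⟩⟩, rfl⟩


private lemma sum_extend_aux {ι κ : Type*} [Fintype ι] [Fintype κ] (e : ι ↪ κ)
    {M : Type*} [AddCommMonoid M] (f : κ → M) (hf : ∀ i, (¬∃ j, e j = i) → f i = 0) :
    ∑ i, f i = ∑ j, f (e j) := by
  classical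
  have h1 : ∑ j, f (e j) = ∑ i ∈ Finset.univ.image ⇑e, f i :=
    (Finset.sum_image (fun a _ b _ h => e.injective h)).symm
  rw [h1]
  refine (Finset.sum_subset (Finset.subset_univ _) ?_).symm
  intro i _ hi
  simp only [Finset.mem_image, Finset.mem_univ, true_and] at hi
  exact hf i (by simpa using hi)

lemma isCompact_convexHull_R2 {s : Set (ℝ × ℝ)} (hs : IsCompact s) :
    IsCompact (convexHull ℝ s) := by
  rcases s.eq_empty_or_nonempty with rfl | ⟨z₀, hz₀⟩
  · simp
  classical
  set W : Set (Fin 3 → ℝ) := {w | (∀ i, 0 ≤ w i) ∧ ∑ i, w i = 1} with hW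
  have hWc : IsCompact W := by
    apply Metric.isCompact_of_isClosed_isBounded
    · have hset : W = {w : Fin 3 → ℝ | ∀ i, 0 ≤ w i} ∩ {w | ∑ i, w i = 1} := rfl
      rw [hset]
      apply IsClosed.inter
      · have h2 : {w : Fin 3 → ℝ | ∀ i, 0 ≤ w i} = ⋂ i, {w | 0 ≤ w i} := by ext; simp
        rw [h2]
        exact isClosed_iInter fun i => isClosed_le continuous_const
          (continuous_apply (A := fun _ : Fin 3 => ℝ) i)
      · have hc : Continuous (fun w : Fin 3 → ℝ => ∑ i, w i) :=
          continuous_finset_sum Finset.univ (fun i _ => continuous_apply (A := fun _ : Fin 3 => ℝ) i)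
        exact isClosed_eq hc continuous_const
    · apply Bornology.IsBounded.subset (Metric.isBounded_closedBall (x := (0 : Fin 3 → ℝ)) (r := 1))
      rintro w ⟨h0, h1⟩
      rw [Metric.mem_closedBall, dist_zero_right]
      refine (pi_norm_le_iff_of_nonneg zero_le_one).2 fun i => ?_
      rw [Real.norm_eq_abs, abs_of_nonneg (h0 i)]
      calc w i ≤ ∑ j, w j := Finset.single_le_sum (fun j _ => h0 j) (Finset.mem_univ i)
        _ = 1 := h1
  have hPc : IsCompact (Set.pi Set.univ (fun _ : Fin 3 => s)) := isCompact_univ_pi fun _ => hs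
  have hD : IsCompact (W ×ˢ (Set.pi Set.univ (fun _ : Fin 3 => s))) := hWc.prod hPc
  have hf : Continuous (fun q : (Fin 3 → ℝ) × (Fin 3 → ℝ × ℝ) => ∑ i, q.1 i • q.2 i) := by
    apply continuous_finset_sum
    intro i _
    exact ((continuous_apply i).comp continuous_fst).smul ((continuous_apply i).comp continuous_snd)
  have key : convexHull ℝ s =
      (fun q : (Fin 3 → ℝ) × (Fin 3 → ℝ × ℝ) => ∑ i, q.1 i • q.2 i) ''
        (W ×ˢ (Set.pi Set.univ (fun _ : Fin 3 => s))) := by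
    apply Subset.antisymm
    · intro x hx
      obtain ⟨ι, hfin, z, w, hzs, hai, hw0, hw1, hwz⟩ := eq_pos_convex_span_of_mem_convexHull hx
      have hcard : Fintype.card ι ≤ 3 := by
        have h1 := hai.card_le_finrank_succ
        have h2 : Module.finrank ℝ (vectorSpan ℝ (Set.range z)) ≤ Module.finrank ℝ (ℝ × ℝ) :=
          Submodule.finrank_le _
        have h3 : Module.finrank ℝ (ℝ × ℝ) = 2 := by
          simp [Module.finrank_prod]
        omega
      obtain ⟨e⟩ : Nonempty (ι ↪ Fin 3) := Function.Embedding.nonempty_of_card_le (by simpa)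
      refine ⟨(Function.extend e w 0, Function.extend e z (fun _ => z₀)), ⟨⟨?_, ?_⟩, ?_⟩, ?_⟩
      · intro i
        show 0 ≤ Function.extend e w 0 i
        rcases em (∃ j, e j = i) with ⟨j, rfl⟩ | h
        · rw [e.injective.extend_apply]; exact (hw0 j).le
        · rw [Function.extend_apply' _ _ _ h]; rfl
      · show ∑ i, Function.extend e w 0 i = 1
        refine (sum_extend_aux e (Function.extend ⇑e w 0)
          (fun i hi => Function.extend_apply' w (0 : Fin 3 → ℝ) i hi)).trans ?_
        simp only [e.injective.extend_apply]
        exact hw1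
      · intro i _
        show Function.extend e z (fun _ => z₀) i ∈ s
        rcases em (∃ j, e j = i) with ⟨j, rfl⟩ | h
        · rw [e.injective.extend_apply]; exact hzs ⟨j, rfl⟩
        · rw [Function.extend_apply' _ _ _ h]; exact hz₀
      · show ∑ i, Function.extend e w 0 i • Function.extend e z (fun _ => z₀) i = x
        refine (sum_extend_aux e
          (fun i => Function.extend ⇑e w 0 i • Function.extend ⇑e z (fun _ => z₀) i)
          (fun i hi => by
            simp only [Function.extend_apply' w (0 : Fin 3 → ℝ) i hi, Pi.zero_apply,
              zero_smul])).trans ?_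
        simp only [e.injective.extend_apply]
        exact hwz
    · rintro x ⟨⟨w, p⟩, ⟨⟨h0, h1⟩, hp⟩, rfl⟩
      exact (convex_convexHull ℝ s).sum_mem (fun i _ => h0 i) h1
        (fun i _ => subset_convexHull ℝ s (hp i (Set.mem_univ i)))
  rw [key]
  exact hD.image hf


lemma trunc_lemma (X : Set (ℝ × ℝ)) (x y : ℝ × ℝ) (hy : y ∈ convexHull ℝ X)
    (hxy : dist y x < 1) :
    y ∈ convexHull ℝ ((X ∩ closedBall x 2) ∪ (closure (convexHull ℝ X) ∩ sphere x 2)) := by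
  classical
  set U : Set (ℝ × ℝ) := (X ∩ closedBall x 2) ∪ (closure (convexHull ℝ X) ∩ sphere x 2) with hU
  rw [convexHull_eq] at hy
  obtain ⟨ι, t, w, z, hw0, hw1, hz, hcm⟩ := hy
  set t' : Finset ι := {i ∈ t | w i ≠ 0} with ht'
  have hw1' : ∑ i ∈ t', w i = 1 := by
    rw [ht', Finset.sum_filter_ne_zero]; exact hw1
  have hcm' : t'.centerMass w z = y := by rw [ht', Finset.centerMass_filter_ne_zero]; exact hcm
  have hwpos : ∀ i ∈ t', 0 < w i := fun i hi => by
    rw [ht', Finset.mem_filter] at hi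
    exact lt_of_le_of_ne (hw0 i hi.1) (Ne.symm hi.2)
  have hzX : ∀ i ∈ t', z i ∈ X := fun i hi => hz i (Finset.mem_filter.1 hi).1
  have hzhull : ∀ i ∈ t', z i ∈ convexHull ℝ X := fun i hi => subset_convexHull ℝ X (hzX i hi)
  -- for each i, choose s i ∈ (0,1] and q i = (1 - s i) • y + s i • z i  with q i ∈ U when i ∈ t'
  have hex : ∀ i : ι, ∃ (s : ℝ) (q : ℝ × ℝ), 0 < s ∧ s ≤ 1 ∧ q = (1 - s) • y + s • z i ∧
      (i ∈ t' → q ∈ U) := by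
    intro i
    by_cases hit : i ∈ t'
    · by_cases hb : z i ∈ closedBall x 2
      · exact ⟨1, z i, one_pos, le_refl 1, by simp, fun _ => Or.inl ⟨hzX i hit, hb⟩⟩
      · -- use IVT to find the sphere crossing
        have hg : ContinuousOn (fun s : ℝ => dist ((1 - s) • y + s • z i) x) (Icc 0 1) := by
          apply Continuous.continuousOn
          exact (Continuous.add ((continuous_const.sub continuous_id).smul continuous_const)
            (continuous_id.smul continuous_const)).dist continuous_const
        have h0 : dist ((1 - (0:ℝ)) • y + (0:ℝ) • z i) x = dist y x := by simp
        have h1 : dist ((1 - (1:ℝ)) • y + (1:ℝ) • z i) x = dist (z i) x := by simp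
        have hmem : (2:ℝ) ∈ Icc (dist ((1 - (0:ℝ)) • y + (0:ℝ) • z i) x)
            (dist ((1 - (1:ℝ)) • y + (1:ℝ) • z i) x) := by
          rw [h0, h1]
          constructor
          · linarith
          · rw [mem_closedBall] at hb; linarith [not_le.1 hb]
        obtain ⟨s, hs, hgs⟩ := intermediate_value_Icc zero_le_one hg hmem
        have hgs' : dist ((1 - s) • y + s • z i) x = 2 := hgs
        have hs0 : s ≠ 0 := by
          rintro rfl
          rw [h0] at hgs'
          linarith
        refine ⟨s, (1 - s) • y + s • z i, lt_of_le_of_ne hs.1 (Ne.symm hs0), hs.2, rfl, fun _ => ?_⟩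
        refine Or.inr ⟨?_, hgs'⟩
        apply subset_closure
        have hy' : y ∈ convexHull ℝ X := by
          rw [convexHull_eq]; exact ⟨ι, t, w, z, hw0, hw1, hz, hcm⟩
        exact (convex_convexHull ℝ X) hy' (hzhull i hit) (by linarith [hs.1, hs.2])
          (le_of_lt (lt_of_le_of_ne hs.1 (Ne.symm hs0))) (by ring)
    · exact ⟨1, z i, one_pos, le_refl 1, by simp, fun h => absurd h hit⟩
  choose s q hs0 hs1 hq hqU using hex
  -- y is the center of mass of the q i with weights w i / s i
  have hwq0 : ∀ i ∈ t', 0 ≤ w i / s i := fun i hi =>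
    div_nonneg (hwpos i hi).le (hs0 i).le
  have hsumpos : 0 < ∑ i ∈ t', w i / s i := by
    have : (1:ℝ) ≤ ∑ i ∈ t', w i / s i := by
      rw [← hw1']
      apply Finset.sum_le_sum
      intro i hi
      rw [le_div_iff₀ (hs0 i)]
      nlinarith [(hwpos i hi), hs1 i, hs0 i]
    linarith
  have hsum : ∑ i ∈ t', (w i / s i) • q i = (∑ i ∈ t', w i / s i) • y := by
    have h1 : ∀ i ∈ t', (w i / s i) • q i = (w i * ((1 - s i) / s i)) • y + w i • z i := by
      intro i hi
      rw [hq i]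
      rw [smul_add, smul_smul, smul_smul]
      congr 2
      · ring
      · exact div_mul_cancel₀ _ (ne_of_gt (hs0 i))
    rw [Finset.sum_congr rfl h1, Finset.sum_add_distrib, ← Finset.sum_smul]
    have h2 : ∑ i ∈ t', w i • z i = y := by
      rw [← hcm', Finset.centerMass_eq_of_sum_1 _ _ hw1']
    have hterm : ∀ i ∈ t', w i * ((1 - s i) / s i) + w i = w i / s i := by
      intro i hi
      have hsne : s i ≠ 0 := ne_of_gt (hs0 i)
      field_simp
      ring
    have h4 : ∑ i ∈ t', w i / s i = (∑ i ∈ t', w i * ((1 - s i) / s i)) + 1 := by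
      rw [← Finset.sum_congr rfl hterm, Finset.sum_add_distrib, hw1']
    rw [h2, h4, add_smul, one_smul]
  have : t'.centerMass (fun i => w i / s i) q = y := by
    rw [Finset.centerMass, hsum, smul_smul, inv_mul_cancel₀ (ne_of_gt hsumpos), one_smul]
  rw [← this]
  exact Finset.centerMass_mem_convexHull t' hwq0 hsumpos (fun i hi => hqU i hi)

lemma milman_step (X : Set (ℝ × ℝ))
    (hX : X ⊆ {p : ℝ × ℝ | ∃ a b : ℤ, p = ((a : ℝ), (b : ℝ))})
    (x : ℝ × ℝ) (hx : x ∈ (closure (convexHull ℝ X)).extremePoints ℝ) : x ∈ X := by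
  classical
  set C := closure (convexHull ℝ X) with hC
  set t : Set (ℝ × ℝ) := (X ∩ closedBall x 2) ∪ (C ∩ sphere x 2) with ht
  have hCconv : Convex ℝ C := (convex_convexHull ℝ X).closure
  have htC : t ⊆ C := by
    rintro p (⟨hp, -⟩ | ⟨hp, -⟩)
    · exact subset_closure (subset_convexHull ℝ X hp)
    · exact hp
  -- t is compact
  have hXfin : (X ∩ closedBall x 2).Finite := by
    apply Set.Finite.subset (intpts_icc_finite (x.1 - 2, x.2 - 2) (x.1 + 2, x.2 + 2))
    rintro p ⟨hp, hpb⟩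
    rw [mem_closedBall, Prod.dist_eq, max_le_iff, Real.dist_eq, Real.dist_eq,
      abs_le, abs_le] at hpb
    refine ⟨hX hp, ⟨?_, ?_⟩, ⟨?_, ?_⟩⟩
    · show x.1 - 2 ≤ p.1; linarith [hpb.1.1]
    · show x.2 - 2 ≤ p.2; linarith [hpb.2.1]
    · show p.1 ≤ x.1 + 2; linarith [hpb.1.2]
    · show p.2 ≤ x.2 + 2; linarith [hpb.2.2]
  have htcpt : IsCompact t :=
    hXfin.isCompact.union ((isCompact_sphere x 2).inter_left isClosed_closure)
  have hhullcpt : IsCompact (convexHull ℝ t) := isCompact_convexHull_R2 htcpt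
  -- x belongs to convexHull t
  have hxt : x ∈ convexHull ℝ t := by
    have hxcl : x ∈ closure (convexHull ℝ X ∩ ball x 1) := by
      rw [_root_.mem_closure_iff]
      intro O hO hxO
      have hx' : x ∈ C := hx.1
      rw [hC, _root_.mem_closure_iff] at hx'
      obtain ⟨z, hz, hz2⟩ := hx' (O ∩ ball x 1) (hO.inter isOpen_ball)
        ⟨hxO, mem_ball_self one_pos⟩
      exact ⟨z, hz.1, hz2, hz.2⟩
    have hsub : convexHull ℝ X ∩ ball x 1 ⊆ convexHull ℝ t := by
      rintro y ⟨hy, hyb⟩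
      exact trunc_lemma X x y hy (mem_ball.1 hyb)
    have : x ∈ closure (convexHull ℝ t) := closure_mono hsub hxcl
    rwa [hhullcpt.isClosed.closure_eq] at this
  -- x is an extreme point of convexHull t
  have hxext : x ∈ (convexHull ℝ t).extremePoints ℝ := by
    refine ⟨hxt, fun y hy z hz hseg => ?_⟩
    exact hx.2 (convexHull_min htC hCconv hy) (convexHull_min htC hCconv hz) hseg
  have := extremePoints_convexHull_subset hxext
  rcases this with ⟨hp, -⟩ | ⟨-, hp⟩
  · exact hp
  · exfalso
    rw [mem_sphere] at hp
    simp at hp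


lemma extreme_localize {C B : Set (ℝ × ℝ)} (hC : Convex ℝ C) {x : ℝ × ℝ}
    (hx : x ∈ (C ∩ B).extremePoints ℝ) (hB : B ∈ nhds x) : x ∈ C.extremePoints ℝ := by
  obtain ⟨ε, hε, hball⟩ := Metric.mem_nhds_iff.1 hB
  have hxC : x ∈ C := hx.1.1
  refine ⟨hxC, fun y hy z hz hseg => ?_⟩
  obtain ⟨a, b, ha, hb, hab, hxy⟩ := hseg
  set d : ℝ := dist y x + dist z x + 1 with hd
  have hd0 : 0 < d := by positivity
  set T : ℝ := min 1 (ε / d) with hT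
  have hT0 : 0 < T := lt_min one_pos (div_pos hε hd0)
  have hT1 : T ≤ 1 := min_le_left _ _
  have hTle : T ≤ ε / d := min_le_right _ _
  have hTy : T * dist y x < ε := by
    have h1 : T * dist y x ≤ (ε / d) * dist y x :=
      mul_le_mul_of_nonneg_right hTle dist_nonneg
    have h2 : (ε / d) * dist y x < ε := by
      rw [div_mul_eq_mul_div, div_lt_iff₀ hd0]
      nlinarith [dist_nonneg (x := y) (y := x), dist_nonneg (x := z) (y := x)]
    linarith
  have hTz : T * dist z x < ε := by
    have h1 : T * dist z x ≤ (ε / d) * dist z x :=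
      mul_le_mul_of_nonneg_right hTle dist_nonneg
    have h2 : (ε / d) * dist z x < ε := by
      rw [div_mul_eq_mul_div, div_lt_iff₀ hd0]
      nlinarith [dist_nonneg (x := y) (y := x), dist_nonneg (x := z) (y := x)]
    linarith
  set y' : ℝ × ℝ := x + T • (y - x) with hy'
  set z' : ℝ × ℝ := x + T • (z - x) with hz'
  have hy'C : y' ∈ C := by
    have heq : y' = (1 - T) • x + T • y := by
      rw [hy', smul_sub, sub_smul, one_smul]; abel
    rw [heq]
    exact hC hxC hy (by linarith) hT0.le (by ring)
  have hz'C : z' ∈ C := by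
    have heq : z' = (1 - T) • x + T • z := by
      rw [hz', smul_sub, sub_smul, one_smul]; abel
    rw [heq]
    exact hC hxC hz (by linarith) hT0.le (by ring)
  have hy'B : y' ∈ B := by
    apply hball
    rw [mem_ball, hy', dist_eq_norm, add_sub_cancel_left, norm_smul, Real.norm_of_nonneg hT0.le,
      ← dist_eq_norm]
    exact hTy
  have hz'B : z' ∈ B := by
    apply hball
    rw [mem_ball, hz', dist_eq_norm, add_sub_cancel_left, norm_smul, Real.norm_of_nonneg hT0.le,
      ← dist_eq_norm]
    exact hTz
  have hseg' : x ∈ openSegment ℝ y' z' := by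
    refine ⟨a, b, ha, hb, hab, ?_⟩
    have h1 := congrArg Prod.fst hxy
    have h2 := congrArg Prod.snd hxy
    simp only [Prod.fst_add, Prod.snd_add, Prod.smul_fst, Prod.smul_snd, smul_eq_mul] at h1 h2
    rw [hy', hz']
    apply Prod.ext
    · simp only [Prod.fst_add, Prod.smul_fst, Prod.fst_sub, smul_eq_mul]
      linear_combination T * h1 + (x.1 - T * x.1) * hab
    · simp only [Prod.snd_add, Prod.smul_snd, Prod.snd_sub, smul_eq_mul]
      linear_combination T * h2 + (x.2 - T * x.2) * hab
  have hy'x := hx.2 ⟨hy'C, hy'B⟩ ⟨hz'C, hz'B⟩ hseg'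
  · have h0 : T • (y - x) = 0 := by
      have h := hy'x
      rw [hy'] at h
      exact add_eq_left.1 h
    rcases smul_eq_zero.1 h0 with h | h
    · exact absurd h (ne_of_gt hT0)
    · exact sub_eq_zero.1 h


lemma no_three_chain_finite {S : Set ℝ}
    (h : ∀ u ∈ S, ∀ v ∈ S, ∀ w ∈ S, u < v → v < w → False) : S.Finite := by
  by_contra hinf
  rw [← Set.not_infinite, not_not] at hinf
  obtain ⟨a, ha⟩ := hinf.nonempty
  obtain ⟨b, hb⟩ := (hinf.diff (Set.finite_singleton a)).nonempty
  obtain ⟨c, hc⟩ := (hinf.diff ((Set.finite_singleton a).insert b)).nonempty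
  obtain ⟨hbS, hba⟩ : b ∈ S ∧ b ≠ a := by
    refine ⟨hb.1, ?_⟩; have := hb.2; simp at this; exact this
  obtain ⟨hcS, hcb, hca⟩ : c ∈ S ∧ c ≠ b ∧ c ≠ a := by
    have := hc.2; simp at this; exact ⟨hc.1, this.1, this.2⟩
  rcases lt_trichotomy a b with h1 | h1 | h1
  · rcases lt_trichotomy b c with h2 | h2 | h2
    · exact h a ha b hbS c hcS h1 h2
    · exact hcb h2.symm
    · rcases lt_trichotomy a c with h3 | h3 | h3
      · exact h a ha c hcS b hbS h3 h2
      · exact hca h3.symm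
      · exact h c hcS a ha b hbS h3 h1
  · exact hba h1.symm
  · rcases lt_trichotomy a c with h2 | h2 | h2
    · exact h b hbS a ha c hcS h1 h2
    · exact hca h2.symm
    · rcases lt_trichotomy b c with h3 | h3 | h3
      · exact h b hbS c hcS a ha h3 h2
      · exact hcb h3.symm
      · exact h c hcS b hbS a ha h3 h1

lemma middle_openSegment_fst {p m q : ℝ × ℝ} (hpm : p.1 = m.1) (hqm : q.1 = m.1)
    (h1 : p.2 < m.2) (h2 : m.2 < q.2) : m ∈ openSegment ℝ p q := by
  have hden : 0 < q.2 - p.2 := by linarith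
  refine ⟨(q.2 - m.2) / (q.2 - p.2), (m.2 - p.2) / (q.2 - p.2),
    div_pos (by linarith) hden, div_pos (by linarith) hden, by field_simp; ring, ?_⟩
  apply Prod.ext
  · simp only [Prod.fst_add, Prod.smul_fst, smul_eq_mul, hpm, hqm]
    field_simp
    ring
  · simp only [Prod.snd_add, Prod.smul_snd, smul_eq_mul]
    field_simp
    ring

lemma middle_openSegment_snd {p m q : ℝ × ℝ} (hpm : p.2 = m.2) (hqm : q.2 = m.2)
    (h1 : p.1 < m.1) (h2 : m.1 < q.1) : m ∈ openSegment ℝ p q := by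
  have hden : 0 < q.1 - p.1 := by linarith
  refine ⟨(q.1 - m.1) / (q.1 - p.1), (m.1 - p.1) / (q.1 - p.1),
    div_pos (by linarith) hden, div_pos (by linarith) hden, by field_simp; ring, ?_⟩
  apply Prod.ext
  · simp only [Prod.fst_add, Prod.smul_fst, smul_eq_mul]
    field_simp
    ring
  · simp only [Prod.snd_add, Prod.smul_snd, smul_eq_mul, hpm, hqm]
    field_simp
    ring

lemma extreme_line_fst_finite (K : Set (ℝ × ℝ)) (c : ℝ) :
    ({p ∈ K.extremePoints ℝ | p.1 = c}).Finite := by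
  set S : Set (ℝ × ℝ) := {p ∈ K.extremePoints ℝ | p.1 = c} with hS
  have h2 : (Prod.snd '' S).Finite := by
    apply no_three_chain_finite
    rintro u ⟨p, hp, rfl⟩ v ⟨m, hm, rfl⟩ w ⟨q, hq, rfl⟩ h1 h2
    have hseg := middle_openSegment_fst (hp.2.trans hm.2.symm) (hq.2.trans hm.2.symm) h1 h2
    have := hm.1.2 (extremePoints_subset hp.1) (extremePoints_subset hq.1) hseg
    rw [← this] at h1
    exact lt_irrefl _ h1
  apply Set.Finite.subset (h2.image (fun r => ((c : ℝ), r)))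
  rintro p ⟨hp, hpc⟩
  exact ⟨p.2, ⟨p, ⟨hp, hpc⟩, rfl⟩, by rw [← hpc]⟩

lemma extreme_line_snd_finite (K : Set (ℝ × ℝ)) (c : ℝ) :
    ({p ∈ K.extremePoints ℝ | p.2 = c}).Finite := by
  set S : Set (ℝ × ℝ) := {p ∈ K.extremePoints ℝ | p.2 = c} with hS
  have h2 : (Prod.fst '' S).Finite := by
    apply no_three_chain_finite
    rintro u ⟨p, hp, rfl⟩ v ⟨m, hm, rfl⟩ w ⟨q, hq, rfl⟩ h1 h2
    have hseg := middle_openSegment_snd (hp.2.trans hm.2.symm) (hq.2.trans hm.2.symm) h1 h2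
    have := hm.1.2 (extremePoints_subset hp.1) (extremePoints_subset hq.1) hseg
    rw [← this] at h1
    exact lt_irrefl _ h1
  apply Set.Finite.subset (h2.image (fun r => (r, (c : ℝ))))
  rintro p ⟨hp, hpc⟩
  exact ⟨p.1, ⟨p, ⟨hp, hpc⟩, rfl⟩, by rw [← hpc]⟩

theorem closed_convexHull_locally_polyhedral_dim2
    (X : Set (ℝ × ℝ))
    (hX : X ⊆ {p : ℝ × ℝ | ∃ a b : ℤ, p = ((a : ℝ), (b : ℝ))}) :
    ∀ l u : ℝ × ℝ, ∃ F : Finset (ℝ × ℝ),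
      closure (convexHull ℝ X) ∩ Set.Icc l u = convexHull ℝ (F : Set (ℝ × ℝ)) := by
  intro l u
  classical
  set C : Set (ℝ × ℝ) := closure (convexHull ℝ X) with hC
  set K : Set (ℝ × ℝ) := C ∩ Set.Icc l u with hK
  have hCconv : Convex ℝ C := (convex_convexHull ℝ X).closure
  have hKconv : Convex ℝ K := hCconv.inter (convex_Icc l u)
  have hKcpt : IsCompact K := isCompact_Icc.inter_left isClosed_closure
  have hext : (K.extremePoints ℝ).Finite := by
    have hsub : K.extremePoints ℝ ⊆
        ({p : ℝ × ℝ | ∃ a b : ℤ, p = ((a : ℝ), (b : ℝ))} ∩ Set.Icc l u)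
        ∪ ({p ∈ K.extremePoints ℝ | p.1 = l.1}
        ∪ ({p ∈ K.extremePoints ℝ | p.1 = u.1}
        ∪ ({p ∈ K.extremePoints ℝ | p.2 = l.2}
        ∪ {p ∈ K.extremePoints ℝ | p.2 = u.2}))) := by
      intro x hx
      by_cases h1 : x.1 = l.1
      · exact Or.inr (Or.inl ⟨hx, h1⟩)
      by_cases h2 : x.1 = u.1
      · exact Or.inr (Or.inr (Or.inl ⟨hx, h2⟩))
      by_cases h3 : x.2 = l.2
      · exact Or.inr (Or.inr (Or.inr (Or.inl ⟨hx, h3⟩)))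
      by_cases h4 : x.2 = u.2
      · exact Or.inr (Or.inr (Or.inr (Or.inr ⟨hx, h4⟩)))
      left
      have hIcc : x ∈ Set.Icc l u := (extremePoints_subset hx).2
      have hl := Prod.le_def.1 hIcc.1
      have hu := Prod.le_def.1 hIcc.2
      have hnh : Set.Icc l u ∈ nhds x := by
        have hp : Set.Icc l.1 u.1 ×ˢ Set.Icc l.2 u.2 ∈ nhds (x.1, x.2) :=
          prod_mem_nhds (Icc_mem_nhds (lt_of_le_of_ne hl.1 (Ne.symm h1))
              (lt_of_le_of_ne hu.1 h2))
            (Icc_mem_nhds (lt_of_le_of_ne hl.2 (Ne.symm h3))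
              (lt_of_le_of_ne hu.2 h4))
        rw [← Set.Icc_prod_eq] at hp
        simpa using hp
      have hxC : x ∈ C.extremePoints ℝ := extreme_localize hCconv hx hnh
      exact ⟨hX (milman_step X hX x hxC), hIcc⟩
    exact Set.Finite.subset
      ((intpts_icc_finite l u).union ((extreme_line_fst_finite K l.1).union
        ((extreme_line_fst_finite K u.1).union ((extreme_line_snd_finite K l.2).union
          (extreme_line_snd_finite K u.2))))) hsub
  have hKM := closure_convexHull_extremePoints hKcpt hKconv
  rw [((hext.isCompact_convexHull ℝ).isClosed).closure_eq] at hKM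
  exact ⟨hext.toFinset, by rw [hext.coe_toFinset]; exact hKM.symm⟩
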